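/- In NIM with Cash with subtraction set A = {1, 2}, if the pile has n stones and both d < M₁(n) and e < M₂(n) with d ≤ e (Player 1 has at most as much money as Player 2 and both are lower class), then Player 2 wins. Here M₁(n) = n/2 + 1, M₂(n) = n/2 for even n and M₁(n) = M₂(n) = (n+1)/2 for odd n. -/
import Mathlib


/-- NIM with Cash, A = {1,2}: if d < M₁(n), e < M₂(n) and d ≤ e, then
Player 2 wins, where M₁(n) = n/2+1, M₂(n) = n/2 for even n and
M₁(n) = M₂(n) = (n+1)/2 for odd n. -/
theorem nimCash_12_poor_p2_wins (W : ℕ → ℕ → ℕ → Prop)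
    (hW : ∀ n m m', W n m m' ↔
      ∃ a ∈ ({1, 2} : Finset ℕ), a ≤ n ∧ a ≤ m ∧ ¬ W (n - a) m' (m - a))
    (n d e : ℕ)
    (hd : d < if Even n then n / 2 + 1 else (n + 1) / 2)
    (he : e < if Even n then n / 2 else (n + 1) / 2)
    (hde : d ≤ e) :
    ¬ W n d e := by
  induction n using Nat.strong_induction_on generalizing d e with
  | _ n ih =>
  rw [hW]
  push_neg
  intro a ha han had
  have ha' : a = 1 ∨ a = 2 := by simpa using ha
  rcases Nat.even_or_odd n with hn | hn
  · rw [if_pos hn] at hd he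
    have hn2 : n % 2 = 0 := Nat.even_iff.mp hn
    have h2a : 2 * a ≤ n := by omega
    rw [hW]
    refine ⟨a, ha, by omega, by omega, ?_⟩
    have heven : Even (n - a - a) := Nat.even_iff.mpr (by omega)
    refine ih (n - a - a) (by omega) (d - a) (e - a) ?_ ?_ (by omega)
    · rw [if_pos heven]; omega
    · rw [if_pos heven]; omega
  · rw [if_neg (Nat.not_even_iff_odd.mpr hn)] at hd he
    have hn2 : n % 2 = 1 := Nat.odd_iff.mp hn
    have h2a : 2 * a ≤ n := by omega
    rw [hW]
    refine ⟨a, ha, by omega, by omega, ?_⟩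
    have hodd : ¬ Even (n - a - a) := by
      rw [Nat.even_iff]; omega
    refine ih (n - a - a) (by omega) (d - a) (e - a) ?_ ?_ (by omega)
    · rw [if_neg hodd]; omega
    · rw [if_neg hodd]; omega
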